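/- arXiv:1412.2435 — 4 statements merged into one kernel-verified Lean document; each statement's English description precedes it below -/
import Mathlib

section
/- Let t be a real number with 0 < t < 1/n. Then the polytope of n×n real matrices x = (x_{ij}) satisfying x_{ij} ≥ 0 for all i,j, row sums Σ_{j=1}^n x_{ij} = 1 − t for every i = 1,…,n, and column sums Σ_{i=1}^n x_{ij} = 1 for j = 1,…,n−1 and Σ_{i=1}^n x_{in} = 1 − n·t, is non-degenerate; that is, every vertex of this polytope has exactly 2n − 1 nonzero (positive) entries. -/
open Finset Matrix

private lemma nat_eq_of_abs_sub_lt_one {a b : ℕ} (h1 : (a:ℝ) - b < 1) (h2 : (b:ℝ) - a < 1) :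
    a = b := by
  rcases lt_trichotomy a b with h' | h' | h'
  · have : (a:ℝ) + 1 ≤ b := by exact_mod_cast Nat.succ_le_of_lt h'
    linarith
  · exact h'
  · have : (b:ℝ) + 1 ≤ a := by exact_mod_cast Nat.succ_le_of_lt h'
    linarith

/-- **Non-degeneracy of the perturbed Birkhoff polytope** (Liu, 2013).
For `0 < t < 1/n`, the polytope of `n × n` matrices with nonnegative entries, all row
sums equal to `1 - t`, column sums equal to `1` for the first `n - 1` columns and
`1 - n*t` for the last column, is non-degenerate: every vertex (extreme point) has
exactly `2n - 1` positive entries. -/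
theorem perturbed_assignment_polytope_nondegenerate
    (n : ℕ) (hn : 1 ≤ n) (t : ℝ) (ht : 0 < t) (ht' : t < 1 / n)
    (S : Set (Matrix (Fin n) (Fin n) ℝ))
    (hS : S = {x | (∀ i j, 0 ≤ x i j) ∧ (∀ i, ∑ j, x i j = 1 - t) ∧
      (∀ j : Fin n, ∑ i, x i j = if (j : ℕ) = n - 1 then 1 - n * t else 1)}) :
    ∀ x ∈ Set.extremePoints ℝ S,
      (Finset.univ.filter (fun p : Fin n × Fin n => 0 < x p.1 p.2)).card = 2 * n - 1 := by
  subst hS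
  rintro x ⟨⟨hpos, hrow, hcol⟩, hext⟩
  have hn0 : (0:ℝ) < n := by positivity
  have hn1 : (1:ℝ) ≤ n := by exact_mod_cast hn
  have hnt : (n:ℝ) * t < 1 := by
    rw [lt_div_iff₀ hn0] at ht'; linarith
  have ht1 : t < 1 := by nlinarith
  set i0 : Fin n := ⟨0, hn⟩ with hi0
  -- the support
  set E : Finset (Fin n × Fin n) := Finset.univ.filter (fun p : Fin n × Fin n => 0 < x p.1 p.2)
    with hE
  -- ### Step A : kernel lemma
  have hker : ∀ d : Matrix (Fin n) (Fin n) ℝ, (∀ i j, x i j = 0 → d i j = 0) →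
      (∀ i, ∑ j, d i j = 0) → (∀ j, ∑ i, d i j = 0) → d = 0 := by
    intro d hsupp hdr hdc
    -- E nonempty
    have hEne : E.Nonempty := by
      by_contra hne
      rw [Finset.not_nonempty_iff_eq_empty] at hne
      have hx0 : ∀ i j, x i j = 0 := by
        intro i j
        by_contra h
        have : (i, j) ∈ E := by
          simp only [hE, Finset.mem_filter, Finset.mem_univ, true_and]
          exact lt_of_le_of_ne (hpos i j) (Ne.symm h)
        simp [hne] at this
      have := hrow i0
      simp [hx0] at this
      linarith
    set m : ℝ := E.inf' hEne (fun p => x p.1 p.2) with hm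
    have hm0 : 0 < m := by
      rw [hm, Finset.lt_inf'_iff]
      intro p hp
      simp only [hE, Finset.mem_filter] at hp
      exact hp.2
    set D : ℝ := 1 + ∑ p : Fin n × Fin n, |d p.1 p.2| with hD
    have hD1 : (1:ℝ) ≤ D := by
      have : (0:ℝ) ≤ ∑ p : Fin n × Fin n, |d p.1 p.2| := Finset.sum_nonneg fun p _ => abs_nonneg _
      linarith
    have hD0 : (0:ℝ) < D := by linarith
    set ε : ℝ := m / D with hε
    have hε0 : 0 < ε := div_pos hm0 hD0
    have hdb : ∀ i j, ε * |d i j| < m := by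
      intro i j
      have h1 : |d i j| ≤ D - 1 := by
        rw [hD]
        have : |d i j| ≤ ∑ p : Fin n × Fin n, |d p.1 p.2| :=
          Finset.single_le_sum (f := fun p : Fin n × Fin n => |d p.1 p.2|)
            (fun p _ => abs_nonneg _) (Finset.mem_univ (i, j))
        linarith
      calc ε * |d i j| ≤ ε * (D - 1) := by nlinarith
        _ = m * (D-1) / D := by rw [hε]; ring
        _ < m := by
          rw [div_lt_iff₀ hD0]; nlinarith
    have hnn : ∀ (s : ℝ), |s| = 1 → ∀ i j, 0 ≤ x i j + s * ε * d i j := by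
      intro s hs i j
      rcases (hpos i j).eq_or_lt with h | h
      · rw [hsupp i j h.symm]; simp [← h]
      · have hmem : (i, j) ∈ E := by
          simp only [hE, Finset.mem_filter, Finset.mem_univ, true_and]; exact h
        have hmle : m ≤ x i j := Finset.inf'_le _ hmem
        have habs : |s * ε * d i j| = ε * |d i j| := by
          rw [abs_mul, abs_mul, hs, abs_of_pos hε0]; ring
        have h2 := hdb i j
        have h3 := neg_abs_le (s * ε * d i j)
        rw [habs] at h3
        linarith
    -- y = x + ε • d and z = x - ε • d are both in S
    have hmemS : ∀ (s : ℝ), |s| = 1 →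
        (x + (s * ε) • d) ∈ {x : Matrix (Fin n) (Fin n) ℝ | (∀ i j, 0 ≤ x i j) ∧
          (∀ i, ∑ j, x i j = 1 - t) ∧
          (∀ j : Fin n, ∑ i, x i j = if (j : ℕ) = n - 1 then 1 - n * t else 1)} := by
      intro s hs
      refine ⟨fun i j => ?_, fun i => ?_, fun j => ?_⟩
      · have := hnn s hs i j
        simpa [Matrix.add_apply, Matrix.smul_apply, smul_eq_mul, mul_assoc] using this
      · simp only [Matrix.add_apply, Matrix.smul_apply, smul_eq_mul, Finset.sum_add_distrib,
          ← Finset.mul_sum, hdr i, hrow i, mul_zero, add_zero]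
      · simp only [Matrix.add_apply, Matrix.smul_apply, smul_eq_mul, Finset.sum_add_distrib,
          ← Finset.mul_sum, hdc j, hcol j, mul_zero, add_zero]
    have hy := hmemS 1 (by simp)
    have hz := hmemS (-1) (by simp)
    have hseg : x ∈ openSegment ℝ (x + (1 * ε) • d) (x + ((-1) * ε) • d) := by
      refine ⟨1/2, 1/2, by norm_num, by norm_num, by norm_num, ?_⟩
      module
    have h1 := hext hy hz hseg
    have : (1 * ε) • d = 0 := by
      have := congrArg (fun y => y - x) h1
      simpa [add_sub_cancel_left] using this
    rcases smul_eq_zero.mp this with h | h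
    · exact absurd h (by simp; positivity)
    · exact h
  -- ### Step B : connectivity of the support
  have hjl : n - 1 < n := by omega
  set jl : Fin n := ⟨n - 1, hjl⟩ with hjldef
  have hconn : ∀ u v : Fin n → ℝ, (∀ i j, 0 < x i j → u i + v j = 0) →
      (∀ i, u i = u i0) ∧ (∀ j, v j = - u i0) := by
    intro u v huv
    set c : ℝ := u i0 with hc
    set A : Finset (Fin n) := Finset.univ.filter (fun i => u i = c) with hA
    set B : Finset (Fin n) := Finset.univ.filter (fun j => v j = -c) with hB
    have hi0A : i0 ∈ A := by simp [hA, hc]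
    have hAB : ∀ i j, 0 < x i j → (i ∈ A ↔ j ∈ B) := by
      intro i j hij
      have := huv i j hij
      simp only [hA, hB, Finset.mem_filter, Finset.mem_univ, true_and]
      constructor <;> intro h <;> linarith
    have hcross1 : ∀ i ∈ A, ∀ j ∈ Bᶜ, x i j = 0 := by
      intro i hi j hj
      rcases (hpos i j).eq_or_lt with h | h
      · exact h.symm
      · exact absurd ((hAB i j h).mp hi) (by simpa using hj)
    have hcross2 : ∀ j ∈ B, ∀ i ∈ Aᶜ, x i j = 0 := by
      intro j hj i hi
      rcases (hpos i j).eq_or_lt with h | h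
      · exact h.symm
      · exact absurd ((hAB i j h).mpr hj) (by simpa using hi)
    -- the double sum over A × B
    have hsum1 : ∑ i ∈ A, ∑ j ∈ B, x i j = (A.card : ℝ) * (1 - t) := by
      have : ∀ i ∈ A, ∑ j ∈ B, x i j = 1 - t := by
        intro i hi
        have hsplit : ∑ j, x i j = ∑ j ∈ B, x i j + ∑ j ∈ Bᶜ, x i j :=
          (Finset.sum_add_sum_compl B _).symm
        have hz : ∑ j ∈ Bᶜ, x i j = 0 :=
          Finset.sum_eq_zero fun j hj => hcross1 i hi j hj
        rw [hrow i] at hsplit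
        linarith
      rw [Finset.sum_congr rfl this, Finset.sum_const, nsmul_eq_mul]
    have hsum2 : ∑ i ∈ A, ∑ j ∈ B, x i j
        = (B.card : ℝ) - (if jl ∈ B then (n : ℝ) * t else 0) := by
      rw [Finset.sum_comm (f := fun i j => x i j)]
      have hcol' : ∀ j ∈ B, ∑ i ∈ A, x i j
          = 1 - (if j = jl then (n : ℝ) * t else 0) := by
        intro j hj
        have hsplit : ∑ i, x i j = ∑ i ∈ A, x i j + ∑ i ∈ Aᶜ, x i j :=
          (Finset.sum_add_sum_compl A _).symm
        have hz : ∑ i ∈ Aᶜ, x i j = 0 :=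
          Finset.sum_eq_zero fun i hi => hcross2 j hj i hi
        have hcnd : ((j : ℕ) = n - 1) ↔ (j = jl) := by
          rw [Fin.ext_iff]
        rw [hcol j] at hsplit
        rw [if_congr hcnd rfl rfl] at hsplit
        split_ifs at hsplit ⊢ with hcase <;> linarith
      rw [Finset.sum_congr rfl hcol', Finset.sum_sub_distrib, Finset.sum_const, nsmul_eq_mul,
        mul_one, Finset.sum_ite_eq' B jl (fun _ => (n : ℝ) * t)]
    have hAcardN : A.card ≤ n := by
      simpa using Finset.card_le_card (Finset.subset_univ A)
    have hAcard : (A.card : ℝ) ≤ n := by exact_mod_cast hAcardN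
    have hAt : (A.card : ℝ) * t < 1 := by
      have := mul_le_mul_of_nonneg_right hAcard ht.le
      linarith
    have hAt0 : (0:ℝ) ≤ (A.card : ℝ) * t := mul_nonneg (Nat.cast_nonneg _) ht.le
    have key : (A.card : ℝ) * (1 - t) = (B.card : ℝ) - (if jl ∈ B then (n : ℝ) * t else 0) := by
      rw [← hsum1, hsum2]
    have hnt0 : (0:ℝ) < (n:ℝ) * t := mul_pos hn0 ht
    have hcards : A.card = B.card := by
      apply nat_eq_of_abs_sub_lt_one
      · split_ifs at key with hcase <;> linarith
      · split_ifs at key with hcase <;> linarith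
    have hAn : A.card = n ∧ jl ∈ B := by
      rw [hcards] at key
      by_cases hcase : jl ∈ B
      · rw [if_pos hcase] at key
        have hbt : (B.card : ℝ) * t = (n : ℝ) * t := by linarith
        have hb : (B.card : ℝ) = n := mul_right_cancel₀ (ne_of_gt ht) hbt
        have hbn : B.card = n := by exact_mod_cast hb
        exact ⟨by omega, hcase⟩
      · rw [if_neg hcase] at key
        have hbt : (B.card : ℝ) * t = 0 := by linarith
        have hbn : B.card = 0 := by
          rcases mul_eq_zero.mp hbt with h | h
          · exact_mod_cast h
          · exact absurd h (ne_of_gt ht)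
        have := Finset.card_pos.mpr ⟨i0, hi0A⟩
        omega
    have hAuniv : A = Finset.univ := Finset.eq_univ_of_card A (by simp [hAn.1])
    have hBuniv : B = Finset.univ := Finset.eq_univ_of_card B (by simp [← hcards, hAn.1])
    constructor
    · intro i
      have : i ∈ A := hAuniv ▸ Finset.mem_univ i
      simpa [hA] using this
    · intro j
      have : j ∈ B := hBuniv ▸ Finset.mem_univ j
      simpa [hB] using this
  -- ### Step C : rank counting
  classical
  set M : Matrix (Fin n ⊕ Fin n) {p : Fin n × Fin n // p ∈ E} ℝ :=
    fun s e => Sum.elim (fun i => if (e : Fin n × Fin n).1 = i then (1:ℝ) else 0)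
      (fun j => if (e : Fin n × Fin n).2 = j then (1:ℝ) else 0) s with hM
  -- injectivity of `M.mulVecLin`
  have hinj : Function.Injective M.mulVecLin := by
    rw [← LinearMap.ker_eq_bot, LinearMap.ker_eq_bot']
    intro c hc
    rw [Matrix.mulVecLin_apply] at hc
    set d : Matrix (Fin n) (Fin n) ℝ := fun i j =>
      ∑ e : {p : Fin n × Fin n // p ∈ E}, if (e : Fin n × Fin n) = (i, j) then c e else 0
      with hd
    have hrowd : ∀ i, ∑ j, d i j = M.mulVec c (Sum.inl i) := by
      intro i
      simp only [hd, Matrix.mulVec, dotProduct, hM, Sum.elim_inl, ite_mul, one_mul,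
        zero_mul]
      rw [Finset.sum_comm]
      refine Finset.sum_congr rfl fun e _ => ?_
      have hiff : ∀ j : Fin n, ((e : Fin n × Fin n) = (i, j)) ↔
          ((e : Fin n × Fin n).1 = i ∧ (e : Fin n × Fin n).2 = j) := by
        intro j; rw [Prod.ext_iff]
      simp only [hiff]
      by_cases h1 : (e : Fin n × Fin n).1 = i
      · simp [h1]
      · simp [h1]
    have hcold : ∀ j, ∑ i, d i j = M.mulVec c (Sum.inr j) := by
      intro j
      simp only [hd, Matrix.mulVec, dotProduct, hM, Sum.elim_inr, ite_mul, one_mul,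
        zero_mul]
      rw [Finset.sum_comm]
      refine Finset.sum_congr rfl fun e _ => ?_
      have hiff : ∀ i : Fin n, ((e : Fin n × Fin n) = (i, j)) ↔
          ((e : Fin n × Fin n).2 = j ∧ (e : Fin n × Fin n).1 = i) := by
        intro i; rw [Prod.ext_iff, and_comm]
      simp only [hiff]
      by_cases h1 : (e : Fin n × Fin n).2 = j
      · simp [h1]
      · simp [h1]
    have hd0 : d = 0 := by
      apply hker
      · intro i j hxij
        apply Finset.sum_eq_zero
        intro e _
        rw [if_neg]
        intro hcontra
        have he := e.2
        simp only [hE, Finset.mem_filter, Finset.mem_univ, true_and] at he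
        rw [hcontra] at he
        exact absurd hxij (by simpa using ne_of_gt he)
      · intro i; rw [hrowd i, hc]; rfl
      · intro j; rw [hcold j, hc]; rfl
    funext e
    have hde := congrFun (congrFun hd0 (e : Fin n × Fin n).1) (e : Fin n × Fin n).2
    simp only [hd, Matrix.zero_apply] at hde
    have : ∑ e' : {p : Fin n × Fin n // p ∈ E},
        (if e' = e then c e' else 0) = 0 := by
      have heq : ∑ e' : {p : Fin n × Fin n // p ∈ E}, (if e' = e then c e' else 0)
          = ∑ e' : {p : Fin n × Fin n // p ∈ E},
            (if (e' : Fin n × Fin n) = ((e : Fin n × Fin n).1, (e : Fin n × Fin n).2)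
              then c e' else 0) :=
        Finset.sum_congr rfl fun e' _ =>
          if_congr (by rw [Prod.mk.eta, Subtype.coe_inj]) rfl rfl
      rw [heq]; exact hde
    rw [Finset.sum_ite_eq' Finset.univ e c] at this
    simpa using this
  have hrank1 : M.rank = E.card := by
    rw [Matrix.rank, LinearMap.finrank_range_of_inj hinj,
      Module.finrank_fintype_fun_eq_card, Fintype.card_coe]
  -- the kernel of the transpose
  set g : (Fin n ⊕ Fin n) → ℝ := Sum.elim (fun _ => (1:ℝ)) (fun _ => (-1:ℝ)) with hg
  have hmv : ∀ (w : Fin n ⊕ Fin n → ℝ) (e : {p : Fin n × Fin n // p ∈ E}),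
      Mᵀ.mulVec w e = w (Sum.inl (e : Fin n × Fin n).1) + w (Sum.inr (e : Fin n × Fin n).2) := by
    intro w e
    simp [Matrix.mulVec, dotProduct, Matrix.transpose_apply, Matrix.transpose, hM,
      Fintype.sum_sum_type, ite_mul, one_mul, zero_mul]
  have hg0 : g ≠ 0 := by
    intro h
    have := congrFun h (Sum.inl i0)
    simp [hg] at this
  have hgker : LinearMap.ker (Mᵀ.mulVecLin) = Submodule.span ℝ {g} := by
    apply le_antisymm
    · intro w hw
      rw [LinearMap.mem_ker] at hw
      have huv := hconn (fun i => w (Sum.inl i)) (fun j => w (Sum.inr j)) ?_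
      · rw [Submodule.mem_span_singleton]
        refine ⟨w (Sum.inl i0), ?_⟩
        funext s
        cases s with
        | inl i =>
          simp only [Pi.smul_apply, hg, Sum.elim_inl, smul_eq_mul, mul_one]
          exact (huv.1 i).symm
        | inr j =>
          simp only [Pi.smul_apply, hg, Sum.elim_inr, smul_eq_mul, mul_neg, mul_one]
          have := huv.2 j
          linarith [this]
      · intro i j hij
        have he : (i, j) ∈ E := by
          simp only [hE, Finset.mem_filter, Finset.mem_univ, true_and]; exact hij
        have := congrFun hw ⟨(i, j), he⟩
        rw [Matrix.mulVecLin_apply] at this  -- careful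
        rw [hmv w ⟨(i, j), he⟩] at this
        simpa using this
    · rw [Submodule.span_le, Set.singleton_subset_iff, SetLike.mem_coe, LinearMap.mem_ker]
      funext e
      rw [Matrix.mulVecLin_apply, hmv g e]
      simp [hg]
  have hrank2 : Mᵀ.rank + 1 = 2 * n := by
    have hrn := LinearMap.finrank_range_add_finrank_ker (Mᵀ.mulVecLin)
    rw [hgker, finrank_span_singleton hg0] at hrn
    rw [Matrix.rank]
    rw [hrn]
    simp [Module.finrank_fintype_fun_eq_card]
    ring
  have := Matrix.rank_transpose M
  omega
end

section
/- (Optimal Basis Theorem) Let n ≥ 1. Let P be the Birkhoff polytope in R^{n×n}, described by the system A·vec(x) = b, x ≥ 0, where A is the (2n−1) × n² constraint matrix whose first n rows encode the row-sum constraints Σ_j x_{ij} = 1 (i = 1,…,n) and whose remaining n−1 rows encode the column-sum constraints Σ_i x_{ij} = 1 (j = 1,…,n−1), and b is the all-ones vector in R^{2n−1}. Let f : R^{n×n} → R be continuous, quasi-convex, and integer-valued on the vertices of P. Let δ ∈ (0,1) be such that |f(x) − f(y)| < 1/2 whenever x is a vertex of P and ‖x − y‖ < δ (Frobenius norm). Let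 0 < t < δ/(n(2n−1)), and let P'(t) be the perturbed polytope described by A·vec(x) = b', x ≥ 0, where b'_i = 1 − t for the first n components and b'_i = 1 for the remaining n−1 components. Suppose B* is a basis of A whose basic feasible solution x* for right-hand side b' maximizes f over P'(t). Then the basic solution x̂ of the system with right-hand side b corresponding to the same basis B* is feasible (x̂ ∈ P) and f(x̂) = max_{x ∈ P} f(x). -/
open Matrix

/-- Total unimodularity of the Birkhoff constraint matrix: every square
"submatrix" (with injective row selection; column selection arbitrary)
has determinant 0, 1 or -1. -/
lemma birkhoff_tu (n : ℕ) (A : Matrix (Fin (2 * n - 1)) (Fin n × Fin n) ℝ)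
    (hA : ∀ r p, A r p =
      if (r : ℕ) < n then (if (p.1 : ℕ) = (r : ℕ) then 1 else 0)
      else (if (p.2 : ℕ) = (r : ℕ) - n then 1 else 0)) :
    ∀ (k : ℕ) (ρ : Fin k → Fin (2 * n - 1)) (σ : Fin k → Fin n × Fin n),
      Function.Injective ρ →
      (A.submatrix ρ σ).det ∈ ({0, 1, -1} : Set ℝ) := by
  have hA01 : ∀ r p, A r p = 0 ∨ A r p = 1 := by
    intro r p; rw [hA]; split_ifs <;> simp
  intro k
  induction k with
  | zero =>
    intro ρ σ _
    simp [Matrix.det_isEmpty]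
  | succ k ih =>
    intro ρ σ hρ
    set M := A.submatrix ρ σ with hM
    -- structure of nonzero entries in a column
    have hstruct : ∀ (i l : Fin (k + 1)), M i l ≠ 0 →
        (M i l = 1 ∧
          (((ρ i : ℕ) < n ∧ ((σ l).1 : ℕ) = (ρ i : ℕ)) ∨
           (¬ (ρ i : ℕ) < n ∧ ((σ l).2 : ℕ) = (ρ i : ℕ) - n))) := by
      intro i l hne
      have h1 : M i l = A (ρ i) (σ l) := rfl
      rw [h1, hA] at hne ⊢
      constructor
      · split_ifs at hne ⊢ <;> simp_all
      · split_ifs at hne with h2 h3 h4 <;> simp_all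
    -- uniqueness of top/bottom nonzero position
    have htopu : ∀ (i i' l : Fin (k+1)), M i l ≠ 0 → M i' l ≠ 0 →
        (ρ i : ℕ) < n → (ρ i' : ℕ) < n → i = i' := by
      intro i i' l hi hi' h1 h2
      obtain ⟨-, hi⟩ := hstruct i l hi
      obtain ⟨-, hi'⟩ := hstruct i' l hi'
      apply hρ; apply Fin.ext
      rcases hi with ⟨-, hi⟩ | ⟨h, -⟩
      · rcases hi' with ⟨-, hi'⟩ | ⟨h', -⟩
        · omega
        · omega
      · omega
    have hbotu : ∀ (i i' l : Fin (k+1)), M i l ≠ 0 → M i' l ≠ 0 →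
        ¬ (ρ i : ℕ) < n → ¬ (ρ i' : ℕ) < n → i = i' := by
      intro i i' l hi hi' h1 h2
      obtain ⟨-, hi⟩ := hstruct i l hi
      obtain ⟨-, hi'⟩ := hstruct i' l hi'
      apply hρ; apply Fin.ext
      rcases hi with ⟨h, -⟩ | ⟨-, hi⟩
      · omega
      · rcases hi' with ⟨h', -⟩ | ⟨-, hi'⟩
        · omega
        · omega
    by_cases hcol : ∀ l : Fin (k + 1), ∃ i₀ i₁ : Fin (k + 1),
        i₀ ≠ i₁ ∧ M i₀ l ≠ 0 ∧ M i₁ l ≠ 0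
    · -- every column has two nonzero entries: rows are dependent, det = 0
      left
      rw [← exists_vecMul_eq_zero_iff]
      refine ⟨fun i => if (ρ i : ℕ) < n then (1 : ℝ) else -1, ?_, ?_⟩
      · intro h0
        obtain ⟨i₀, -, -, -, -⟩ := hcol 0
        have := congrFun h0 i₀
        simp only [Pi.zero_apply] at this
        split_ifs at this <;> norm_num at this
      · funext l
        obtain ⟨i₀, i₁, hne, h₀, h₁⟩ := hcol l
        -- one of i₀, i₁ is "top", the other "bottom"
        obtain ⟨itop, ibot, htop, hbot, hts, hbs⟩ :
            ∃ itop ibot : Fin (k+1), (ρ itop : ℕ) < n ∧ ¬ (ρ ibot : ℕ) < n ∧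
              M itop l ≠ 0 ∧ M ibot l ≠ 0 := by
          by_cases c0 : (ρ i₀ : ℕ) < n
          · by_cases c1 : (ρ i₁ : ℕ) < n
            · exact absurd (htopu i₀ i₁ l h₀ h₁ c0 c1) hne
            · exact ⟨i₀, i₁, c0, c1, h₀, h₁⟩
          · by_cases c1 : (ρ i₁ : ℕ) < n
            · exact ⟨i₁, i₀, c1, c0, h₁, h₀⟩
            · exact absurd (hbotu i₀ i₁ l h₀ h₁ c0 c1) hne
        have hnetb : itop ≠ ibot := by rintro rfl; exact hbot htop
        have key : ∀ i : Fin (k+1), i ∉ ({itop, ibot} : Finset (Fin (k+1))) →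
            (if (ρ i : ℕ) < n then (1:ℝ) else -1) * M i l = 0 := by
          intro i hi
          simp only [Finset.mem_insert, Finset.mem_singleton, not_or] at hi
          by_cases hz : M i l = 0
          · rw [hz, mul_zero]
          · exfalso
            by_cases c : (ρ i : ℕ) < n
            · exact hi.1 (htopu i itop l hz hts c htop)
            · exact hi.2 (hbotu i ibot l hz hbs c hbot)
        have : (fun i => if (ρ i : ℕ) < n then (1:ℝ) else -1) ᵥ* M = fun l' =>
            ∑ i, (if (ρ i : ℕ) < n then (1:ℝ) else -1) * M i l' := by
          funext l'; simp [Matrix.vecMul, dotProduct]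
        rw [this]
        simp only [Pi.zero_apply]
        rw [← Finset.sum_subset (Finset.subset_univ ({itop, ibot} : Finset (Fin (k+1))))
          (fun i _ hi => key i hi)]
        rw [Finset.sum_pair hnetb]
        rw [(hstruct itop l hts).1, (hstruct ibot l hbs).1]
        rw [if_pos htop, if_neg hbot]
        ring
    · push_neg at hcol
      obtain ⟨l, hl⟩ := hcol
      by_cases hz : ∀ i, M i l = 0
      · left
        exact Matrix.det_eq_zero_of_column_eq_zero l hz
      · push_neg at hz
        obtain ⟨i₀, hi₀⟩ := hz
        have honly : ∀ i, i ≠ i₀ → M i l = 0 := by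
          intro i hi
          by_contra hne
          exact hne (hl i₀ i (Ne.symm hi) hi₀)
        rw [Matrix.det_succ_column M l]
        rw [Finset.sum_eq_single i₀]
        · have hd : (M.submatrix i₀.succAbove l.succAbove).det ∈ ({0,1,-1} : Set ℝ) := by
            have : M.submatrix i₀.succAbove l.succAbove =
                A.submatrix (ρ ∘ i₀.succAbove) (σ ∘ l.succAbove) := rfl
            rw [this]
            exact ih _ _ (hρ.comp (Fin.succAbove_right_injective))
          rw [(hstruct i₀ l hi₀).1, mul_one]
          simp only [Set.mem_insert_iff, Set.mem_singleton_iff] at hd ⊢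
          rcases Int.even_or_odd ((i₀ : ℕ) + (l : ℕ)) with he | ho
          · rw [(Even.neg_one_pow (by exact_mod_cast he) : (-1:ℝ)^((i₀:ℕ)+(l:ℕ)) = 1), one_mul]
            exact hd
          · rw [(Odd.neg_one_pow (by exact_mod_cast ho) : (-1:ℝ)^((i₀:ℕ)+(l:ℕ)) = -1)]
            rcases hd with h | h | h <;> rw [h] <;> norm_num
        · intro i _ hi
          rw [honly i hi]; ring
        · intro h; exact absurd (Finset.mem_univ i₀) h


set_option maxHeartbeats 2000000 in
/-- **Optimal Basis Theorem.** Let `P` be the Birkhoff polytope described by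
`A x = b, x ≥ 0`, where `A` is the `(2n-1) × n²` constraint matrix (the `n` row-sum
constraints followed by the first `n-1` column-sum constraints) and `b` is the
all-ones vector.  Let `f` be continuous, quasi-convex and integer valued on the
vertices of `P`, let `δ ∈ (0,1)` be such that `|f x - f y| < 1/2` whenever `x` is a
vertex of `P` and `‖x - y‖ < δ`, and let `0 < t < δ/(n(2n-1))`.  If `B*` is a basis
of `A` whose basic feasible solution `x*` for the perturbed right-hand side `b'`
maximizes `f` over the perturbed polytope `P'(t)`, then the basic solution `x̂` for
the right-hand side `b` corresponding to the same basis is feasible (`x̂ ∈ P`) and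
maximizes `f` over `P`. -/
theorem optimal_basis_theorem
    (n : ℕ) (hn : 1 ≤ n)
    (A : Matrix (Fin (2 * n - 1)) (Fin n × Fin n) ℝ)
    (hA : ∀ r p, A r p =
      if (r : ℕ) < n then (if (p.1 : ℕ) = (r : ℕ) then 1 else 0)
      else (if (p.2 : ℕ) = (r : ℕ) - n then 1 else 0))
    (b b' : Fin (2 * n - 1) → ℝ)
    (hb : ∀ r, b r = 1)
    (t δ : ℝ) (hδ : δ ∈ Set.Ioo (0 : ℝ) 1)
    (ht : 0 < t) (ht' : t < δ / (n * (2 * n - 1)))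
    (hb' : ∀ r, b' r = if (r : ℕ) < n then 1 - t else 1)
    (P P' : Set (Fin n × Fin n → ℝ))
    (hP : P = {x | (∀ p, 0 ≤ x p) ∧ A *ᵥ x = b})
    (hP' : P' = {x | (∀ p, 0 ≤ x p) ∧ A *ᵥ x = b'})
    (f : (Fin n × Fin n → ℝ) → ℝ)
    (hf_cont : Continuous f)
    (hf_qc : QuasiconvexOn ℝ Set.univ f)
    (hf_int : ∀ x ∈ Set.extremePoints ℝ P, ∃ k : ℤ, f x = (k : ℝ))
    (hδf : ∀ x ∈ Set.extremePoints ℝ P, ∀ y,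
      Real.sqrt (∑ p, (x p - y p) ^ 2) < δ → |f x - f y| < 1 / 2)
    (π : Fin (2 * n - 1) → Fin n × Fin n) (hπ : Function.Injective π)
    (B : Matrix (Fin (2 * n - 1)) (Fin (2 * n - 1)) ℝ)
    (hB : B = A.submatrix id π) (hBdet : IsUnit B.det)
    (xstar : Fin n × Fin n → ℝ)
    (hxstar_basic : ∀ i, xstar (π i) = (B⁻¹ *ᵥ b') i)
    (hxstar_nonbasic : ∀ q, q ∉ Set.range π → xstar q = 0)
    (hxstar_feas : xstar ∈ P')
    (hxstar_max : ∀ y ∈ P', f y ≤ f xstar)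
    (xhat : Fin n × Fin n → ℝ)
    (hxhat_basic : ∀ i, xhat (π i) = (B⁻¹ *ᵥ b) i)
    (hxhat_nonbasic : ∀ q, q ∉ Set.range π → xhat q = 0) :
    xhat ∈ P ∧ ∀ y ∈ P, f y ≤ f xhat := by
  have hδ0 : (0:ℝ) < δ := hδ.1
  have hδ1 : δ < 1 := hδ.2
  have hn1 : (1:ℝ) ≤ (n:ℝ) := by exact_mod_cast hn
  have hD : (0:ℝ) < (n:ℝ) * (2 * (n:ℝ) - 1) := by nlinarith
  have tkey : t * ((n:ℝ) * (2 * (n:ℝ) - 1)) < δ := by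
    rw [lt_div_iff₀ hD] at ht'; exact ht'
  have htn1 : t * (n:ℝ) < 1 := by nlinarith
  have hA01 : ∀ r p, A r p = 0 ∨ A r p = 1 := by
    intro r p; rw [hA]; split_ifs <;> simp
  -- determinant of B is ±1
  have hdet1 : B.det = 1 ∨ B.det = -1 := by
    have h := birkhoff_tu n A hA (2*n-1) id π Function.injective_id
    rw [← hB] at h
    simp only [Set.mem_insert_iff, Set.mem_singleton_iff] at h
    rcases h with h | h | h
    · exact absurd h (IsUnit.ne_zero hBdet)
    · exact Or.inl h
    · exact Or.inr h
  -- Cramer's rule for B⁻¹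
  have hcram : ∀ (c : Fin (2*n-1) → ℝ) (i), (B.updateCol i c).det = B.det * (B⁻¹ *ᵥ c) i := by
    intro c i
    have h2 : cramer B c = B.det • (B⁻¹ *ᵥ c) := by
      calc cramer B c = (B⁻¹ * B) *ᵥ cramer B c := by
            rw [Matrix.nonsing_inv_mul B hBdet, Matrix.one_mulVec]
      _ = B⁻¹ *ᵥ (B *ᵥ cramer B c) := by rw [Matrix.mulVec_mulVec]
      _ = B⁻¹ *ᵥ (B.det • c) := by rw [Matrix.mulVec_cramer]
      _ = B.det • (B⁻¹ *ᵥ c) := by rw [Matrix.mulVec_smul]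
    have h3 := congrFun h2 i
    rw [Matrix.cramer_apply] at h3
    simpa using h3
  have hBinv : ∀ (c : Fin (2*n-1) → ℝ) (i), (B⁻¹ *ᵥ c) i = B.det * (B.updateCol i c).det := by
    intro c i
    have h := hcram c i
    rcases hdet1 with hd | hd <;> rw [hd] at h ⊢ <;> linarith
  -- the updated matrix with a "top" standard basis vector column is a submatrix of A
  have hupd : ∀ (i r : Fin (2*n-1)) (hr : (r:ℕ) < n),
      B.updateCol i (Pi.single r 1) =
        A.submatrix id (Function.update π i ((⟨(r:ℕ), hr⟩ : Fin n), (⟨n-1, by omega⟩ : Fin n))) := by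
    intro i r hr
    ext j k
    by_cases hk : k = i
    · subst hk
      rw [Matrix.updateCol_apply, if_pos rfl, Matrix.submatrix_apply,
        Function.update_self, hA, id_eq]
      by_cases hj : (j:ℕ) < n
      · rw [if_pos hj]
        simp only [Pi.single_apply]
        by_cases hjr : j = r
        · subst hjr; simp
        · rw [if_neg hjr, if_neg]
          intro h
          exact hjr (Fin.ext (by simpa using h.symm))
      · rw [if_neg hj]
        have hjlt : (j:ℕ) < 2*n-1 := j.isLt
        rw [if_neg (by simp; omega), Pi.single_apply, if_neg]
        intro h
        have : (j:ℕ) = (r:ℕ) := by rw [h]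
        omega
    · rw [Matrix.updateCol_apply, if_neg hk, Matrix.submatrix_apply,
        Function.update_of_ne hk, hB, Matrix.submatrix_apply, id_eq]
  have hminor : ∀ (i r : Fin (2*n-1)), (r:ℕ) < n →
      |(B.updateCol i (Pi.single r 1)).det| ≤ 1 := by
    intro i r hr
    rw [hupd i r hr]
    have h := birkhoff_tu n A hA (2*n-1) id
      (Function.update π i ((⟨(r:ℕ), hr⟩ : Fin n), (⟨n-1, by omega⟩ : Fin n)))
      Function.injective_id
    simp only [Set.mem_insert_iff, Set.mem_singleton_iff] at h
    rcases h with h | h | h <;> rw [h] <;> norm_num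
  -- the perturbation vector
  set u : Fin (2*n-1) → ℝ := fun r => if (r:ℕ) < n then 1 else 0 with hu
  have hbb' : b = b' + t • u := by
    funext r
    simp only [Pi.add_apply, Pi.smul_apply, smul_eq_mul, hb r, hb' r, hu]
    by_cases h : (r:ℕ) < n <;> simp [h]
  -- the top-row index set
  set S : Finset (Fin (2*n-1)) := Finset.univ.filter (fun r => (r:ℕ) < n) with hS
  have hScard : S.card = n := by
    have himg : Finset.image (fun i : Fin n => (⟨(i:ℕ), by omega⟩ : Fin (2*n-1)))
        Finset.univ = S := by
      ext a
      simp only [Finset.mem_image, Finset.mem_univ, true_and, hS, Finset.mem_filter]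
      constructor
      · rintro ⟨i, rfl⟩; exact i.isLt
      · intro ha; exact ⟨⟨(a:ℕ), ha⟩, Fin.ext rfl⟩
    rw [← himg, Finset.card_image_of_injective _
      (fun i j h => Fin.ext (by simpa [Fin.ext_iff] using h)), Finset.card_univ,
      Fintype.card_fin]
  have husum : u = fun j => ∑ r ∈ S, Pi.single r (1:ℝ) j := by
    funext j
    simp only [Pi.single_apply]
    rw [Finset.sum_ite_eq S j (fun _ => (1:ℝ))]
    rw [hu, hS]
    simp
  -- bound on B⁻¹ *ᵥ u
  have hcru : ∀ i, |(B⁻¹ *ᵥ u) i| ≤ (n:ℝ) := by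
    intro i
    rw [hBinv u i]
    have habs : |B.det| = 1 := by rcases hdet1 with h | h <;> rw [h] <;> norm_num
    rw [abs_mul, habs, one_mul]
    have h1 : (B.updateCol i u).det = ∑ r ∈ S, (B.updateCol i (Pi.single r 1)).det := by
      rw [← Matrix.cramer_apply]
      rw [show u = fun j => ∑ r ∈ S, Pi.single r (1:ℝ) j from husum]
      rw [← Matrix.sum_cramer_apply]
      exact Finset.sum_congr rfl (fun r _ => by rw [Matrix.cramer_apply])
    rw [h1]
    calc |∑ r ∈ S, (B.updateCol i (Pi.single r 1)).det|
        ≤ ∑ r ∈ S, |(B.updateCol i (Pi.single r 1)).det| := Finset.abs_sum_le_sum_abs _ _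
      _ ≤ ∑ r ∈ S, 1 := Finset.sum_le_sum (fun r hr => hminor i r (by
            rw [hS] at hr; simpa using (Finset.mem_filter.mp hr).2))
      _ = (n:ℝ) := by rw [Finset.sum_const, hScard]; simp
  -- integrality of B⁻¹ *ᵥ b
  set Bz : Matrix (Fin (2*n-1)) (Fin (2*n-1)) ℤ := fun j k => if A j (π k) = 0 then 0 else 1 with hBzdef
  have hBz : B = Bz.map (Int.cast : ℤ → ℝ) := by
    ext j k
    rw [Matrix.map_apply, hB, Matrix.submatrix_apply, id_eq, hBzdef]
    rcases hA01 j (π k) with h | h <;> simp [h]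
  have hint : ∀ i, ∃ z : ℤ, (B⁻¹ *ᵥ b) i = (z:ℝ) := by
    intro i
    have h1 : B.updateCol i b = (Bz.updateCol i 1).map (Int.cast : ℤ → ℝ) := by
      ext j k
      by_cases hk : k = i
      · subst hk
        rw [Matrix.map_apply, Matrix.updateCol_apply, Matrix.updateCol_apply,
          if_pos rfl, if_pos rfl, hb]
        simp
      · rw [Matrix.map_apply, Matrix.updateCol_apply, Matrix.updateCol_apply,
          if_neg hk, if_neg hk, hBz, Matrix.map_apply]
    have h2 : (B.updateCol i b).det = (((Bz.updateCol i 1).det : ℤ) : ℝ) := by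
      rw [h1]
      exact ((Int.castRingHom ℝ).map_det (Bz.updateCol i 1)).symm
    rcases hdet1 with hd | hd
    · exact ⟨(Bz.updateCol i 1).det, by rw [hBinv b i, hd, one_mul, h2]⟩
    · exact ⟨-(Bz.updateCol i 1).det, by rw [hBinv b i, hd, h2]; push_cast; ring⟩
  -- difference between the two basic solutions
  have hdiff : ∀ i, xhat (π i) - xstar (π i) = t * (B⁻¹ *ᵥ u) i := by
    intro i
    rw [hxhat_basic i, hxstar_basic i, hbb', Matrix.mulVec_add, Matrix.mulVec_smul]
    simp [smul_eq_mul]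
  have hdbound : ∀ i, |xhat (π i) - xstar (π i)| ≤ t * (n:ℝ) := by
    intro i
    rw [hdiff i, abs_mul, abs_of_pos ht]
    exact mul_le_mul_of_nonneg_left (hcru i) ht.le
  -- support summation lemma
  have himg : ∀ (p : Fin n × Fin n), p ∉ Finset.univ.image π → p ∉ Set.range π := by
    intro p hp ⟨i, hi⟩
    exact hp (Finset.mem_image.mpr ⟨i, Finset.mem_univ i, hi⟩)
  have hsupp : ∀ (w : Fin n × Fin n → ℝ), (∀ q ∉ Set.range π, w q = 0) →
      ∀ r, (A *ᵥ w) r = (B *ᵥ (fun i => w (π i))) r := by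
    intro w hw r
    simp only [Matrix.mulVec, dotProduct, hB, Matrix.submatrix_apply, id_eq]
    rw [← Finset.sum_image (f := fun p => A r p * w p) (g := π)
      (fun x _ y _ h => hπ h)]
    symm
    apply Finset.sum_subset (Finset.subset_univ _)
    intro p _ hp
    rw [hw p (himg p hp), mul_zero]
  have hsum2 : ∀ (g : Fin n × Fin n → ℝ), (∀ q ∉ Set.range π, g q = 0) →
      ∑ p, g p = ∑ i, g (π i) := by
    intro g hg
    rw [← Finset.sum_image (f := g) (g := π) (fun x _ y _ h => hπ h)]
    symm
    apply Finset.sum_subset (Finset.subset_univ _)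
    intro p _ hp
    exact hg p (himg p hp)
  -- feasibility of xhat
  have hxstar_feas' := hxstar_feas
  rw [hP'] at hxstar_feas'
  have hnn : ∀ p, 0 ≤ xhat p := by
    intro p
    by_cases hp : p ∈ Set.range π
    · obtain ⟨i, rfl⟩ := hp
      obtain ⟨z, hz⟩ := hint i
      have hzr : xhat (π i) = (z:ℝ) := by rw [hxhat_basic i, hz]
      have h1 : 0 ≤ xstar (π i) := hxstar_feas'.1 (π i)
      have h2 := hdbound i
      have h3 : (-1:ℝ) < (z:ℝ) := by
        rw [← hzr]
        have := abs_le.mp h2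
        nlinarith
      have h4 : (0:ℤ) ≤ z := by
        have : (-1:ℤ) < z := by exact_mod_cast h3
        omega
      rw [hzr]
      exact_mod_cast h4
    · rw [hxhat_nonbasic p hp]
  have hAxhat : A *ᵥ xhat = b := by
    funext r
    rw [hsupp xhat hxhat_nonbasic r]
    have h1 : (fun i => xhat (π i)) = B⁻¹ *ᵥ b := funext hxhat_basic
    rw [h1, Matrix.mulVec_mulVec, Matrix.mul_nonsing_inv B hBdet, Matrix.one_mulVec]
  have hxhatP : xhat ∈ P := by rw [hP]; exact ⟨hnn, hAxhat⟩
  -- xhat is an extreme point of P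
  have hbasic_unique : ∀ w, w ∈ P → (∀ q ∉ Set.range π, w q = 0) → w = xhat := by
    intro w hw hw0
    have hw' := hw
    rw [hP] at hw'
    have h2 : (fun i => w (π i)) = B⁻¹ *ᵥ b := by
      have h3 : B *ᵥ (fun i => w (π i)) = b := by
        funext r
        rw [← hsupp w hw0 r, hw'.2]
      calc (fun i => w (π i)) = (B⁻¹ * B) *ᵥ (fun i => w (π i)) := by
            rw [Matrix.nonsing_inv_mul B hBdet, Matrix.one_mulVec]
      _ = B⁻¹ *ᵥ (B *ᵥ (fun i => w (π i))) := by rw [Matrix.mulVec_mulVec]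
      _ = B⁻¹ *ᵥ b := by rw [h3]
    funext p
    by_cases hp : p ∈ Set.range π
    · obtain ⟨i, rfl⟩ := hp
      rw [congrFun h2 i, hxhat_basic i]
    · rw [hw0 p hp, hxhat_nonbasic p hp]
  have hext : xhat ∈ Set.extremePoints ℝ P := by
    rw [mem_extremePoints]
    refine ⟨hxhatP, fun y hy z hz hseg => ?_⟩
    obtain ⟨a, c, ha, hc, hac, hsum⟩ := hseg
    have hy' := hy; have hz' := hz
    rw [hP] at hy' hz'
    have hyz0 : ∀ q ∉ Set.range π, y q = 0 ∧ z q = 0 := by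
      intro q hq
      have h0 : a * y q + c * z q = 0 := by
        have := congrFun hsum q
        simp only [Pi.add_apply, Pi.smul_apply, smul_eq_mul] at this
        rw [this, hxhat_nonbasic q hq]
      have h1 := hy'.1 q
      have h2 := hz'.1 q
      constructor <;> nlinarith
    exact ⟨hbasic_unique y hy (fun q hq => (hyz0 q hq).1),
      hbasic_unique z hz (fun q hq => (hyz0 q hq).2)⟩
  -- distance between xhat and xstar
  have hcast2n : ((2*n-1 : ℕ) : ℝ) = 2*(n:ℝ) - 1 := by
    have : 1 ≤ 2*n := by omega
    push_cast [Nat.cast_sub this]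
    ring
  have hdist1 : Real.sqrt (∑ p, (xhat p - xstar p) ^ 2) < δ := by
    have h1 : ∑ p, (xhat p - xstar p)^2 = ∑ i, (xhat (π i) - xstar (π i))^2 :=
      hsum2 _ (fun q hq => by rw [hxhat_nonbasic q hq, hxstar_nonbasic q hq]; ring)
    have h2 : ∑ i, (xhat (π i) - xstar (π i))^2 ≤ ∑ _i : Fin (2*n-1), (t*(n:ℝ))^2 :=
      Finset.sum_le_sum (fun i _ => by
        have h := abs_le.mp (hdbound i)
        nlinarith [h.1, h.2])
    have h3 : ∑ _i : Fin (2*n-1), (t*(n:ℝ))^2 = (2*(n:ℝ)-1) * (t*(n:ℝ))^2 := by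
      rw [Finset.sum_const, Finset.card_univ, Fintype.card_fin, nsmul_eq_mul, hcast2n]
    have hC : (0:ℝ) ≤ t * (n:ℝ) * (2*(n:ℝ)-1) := by nlinarith
    have h4 : ∑ p, (xhat p - xstar p)^2 ≤ (t*(n:ℝ)*(2*(n:ℝ)-1))^2 := by
      rw [h1]
      calc ∑ i, (xhat (π i) - xstar (π i))^2 ≤ (2*(n:ℝ)-1) * (t*(n:ℝ))^2 := by
            rw [← h3]; exact h2
      _ ≤ (t*(n:ℝ)*(2*(n:ℝ)-1))^2 := by nlinarith
    calc Real.sqrt (∑ p, (xhat p - xstar p)^2)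
        ≤ Real.sqrt ((t*(n:ℝ)*(2*(n:ℝ)-1))^2) := Real.sqrt_le_sqrt h4
      _ = t*(n:ℝ)*(2*(n:ℝ)-1) := Real.sqrt_sq hC
      _ < δ := by nlinarith [tkey]
  have hfx : |f xhat - f xstar| < 1/2 := hδf xhat hext xstar hdist1
  -- upper bound on coordinates of points of P
  have hub : ∀ x ∈ P, ∀ p, x p ≤ 1 := by
    intro x hx p
    have hx' := hx
    rw [hP] at hx'
    have hp1 : ((p.1:ℕ) : ℕ) < 2*n-1 := by have := p.1.isLt; omega
    set r : Fin (2*n-1) := ⟨(p.1:ℕ), hp1⟩ with hr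
    have h1 : (A *ᵥ x) r = 1 := by rw [hx'.2, hb]
    have hval : A r p = 1 := by
      rw [hA]
      have : ((r:ℕ)) < n := p.1.isLt
      rw [if_pos this, if_pos (by simp [hr])]
    have h2 : x p ≤ ∑ p', A r p' * x p' := by
      have hnneg : ∀ p' ∈ Finset.univ, 0 ≤ A r p' * x p' := fun p' _ =>
        mul_nonneg (by rcases hA01 r p' with h|h <;> simp [h]) (hx'.1 p')
      have := Finset.single_le_sum hnneg (Finset.mem_univ p)
      rwa [hval, one_mul] at this
    have h3 : (A *ᵥ x) r = ∑ p', A r p' * x p' := by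
      simp [Matrix.mulVec, dotProduct]
    linarith [h2, h3 ▸ h1]
  -- P is compact and convex
  have hPconv : Convex ℝ P := by
    rw [hP]
    intro x hx y hy a c ha hc hac
    constructor
    · intro p
      have := hx.1 p; have := hy.1 p
      simp only [Pi.add_apply, Pi.smul_apply, smul_eq_mul]
      nlinarith
    · rw [Matrix.mulVec_add, Matrix.mulVec_smul, Matrix.mulVec_smul, hx.2, hy.2]
      funext r
      simp only [Pi.add_apply, Pi.smul_apply, smul_eq_mul, hb]
      linarith
  have hPcl : IsClosed P := by
    rw [hP]
    have h1 : IsClosed {x : Fin n × Fin n → ℝ | ∀ p, 0 ≤ x p} := by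
      have : {x : Fin n × Fin n → ℝ | ∀ p, 0 ≤ x p} = ⋂ p, {x | 0 ≤ x p} := by
        ext x; simp [Set.mem_iInter]
      rw [this]
      exact isClosed_iInter (fun p => isClosed_le continuous_const (continuous_apply p))
    have h2 : IsClosed {x : Fin n × Fin n → ℝ | A *ᵥ x = b} := by
      have : {x : Fin n × Fin n → ℝ | A *ᵥ x = b} = ⋂ r, {x | ∑ p, A r p * x p = b r} := by
        ext x
        simp only [Set.mem_setOf_eq, Set.mem_iInter, funext_iff]
        constructor
        · intro h r; rw [← h r]; simp [Matrix.mulVec, dotProduct]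
        · intro h r; rw [← h r]; simp [Matrix.mulVec, dotProduct]
      rw [this]
      exact isClosed_iInter (fun r => isClosed_eq
        (continuous_finset_sum _ (fun p _ => continuous_const.mul (continuous_apply p)))
        continuous_const)
    exact h1.inter h2
  have hPcomp : IsCompact P := by
    apply IsCompact.of_isClosed_subset (isCompact_univ_pi (fun _ => isCompact_Icc)) hPcl
    intro x hx
    rw [Set.mem_univ_pi]
    intro p
    have hx' := hx
    rw [hP] at hx'
    exact ⟨hx'.1 p, hub x hx p⟩
  -- key step: every extreme point of P has f-value ≤ f xhat
  obtain ⟨kx, hkx⟩ := hf_int xhat hext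
  have hkey : ∀ v ∈ Set.extremePoints ℝ P, f v ≤ f xhat := by
    intro v hv
    have hvP : v ∈ P := extremePoints_subset hv
    have hvP' := hvP
    rw [hP] at hvP'
    set w : Fin n × Fin n → ℝ := fun p => if ((p.2:ℕ) = n - 1) then 0 else 1/(n:ℝ) with hwdef
    set y : Fin n × Fin n → ℝ := fun p => (1 - (n:ℝ)*t) * v p + ((n:ℝ)*t) * w p with hydef
    have hn0 : (n:ℝ) ≠ 0 := by linarith
    have hnpos : (0:ℝ) < (n:ℝ) := by linarith
    have hw01 : ∀ p, 0 ≤ w p ∧ w p ≤ 1 := by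
      intro p
      simp only [hwdef]
      by_cases h : ((p.2:ℕ) = n - 1)
      · rw [if_pos h]; norm_num
      · rw [if_neg h]
        constructor
        · positivity
        · rw [div_le_one hnpos]; linarith
    have hnt0 : (0:ℝ) ≤ (n:ℝ)*t := by positivity
    have hnt1' : (n:ℝ)*t < 1 := by nlinarith
    have hyP' : y ∈ P' := by
      rw [hP']
      constructor
      · intro p
        apply add_nonneg
        · exact mul_nonneg (by linarith) (hvP'.1 p)
        · exact mul_nonneg hnt0 (hw01 p).1
      · funext r
        have hAv : (A *ᵥ v) r = 1 := by rw [hvP'.2, hb]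
        have expand : (A *ᵥ y) r = (1 - (n:ℝ)*t) * (A *ᵥ v) r + ((n:ℝ)*t) * (A *ᵥ w) r := by
          simp only [Matrix.mulVec, dotProduct]
          rw [Finset.mul_sum, Finset.mul_sum, ← Finset.sum_add_distrib]
          apply Finset.sum_congr rfl
          intro p _
          simp only [hydef]; ring
        have hAw : (A *ᵥ w) r = if (r:ℕ) < n then ((n:ℝ)-1)/(n:ℝ) else 1 := by
          by_cases hr : (r:ℕ) < n
          · rw [if_pos hr]
            set rh : Fin n := ⟨(r:ℕ), hr⟩ with hrh
            have step1 : (A *ᵥ w) r = ∑ i : Fin n, ∑ j : Fin n,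
                (if (i = rh) then w (i, j) else 0) := by
              simp only [Matrix.mulVec, dotProduct]
              rw [Fintype.sum_prod_type]
              apply Finset.sum_congr rfl; intro i _
              apply Finset.sum_congr rfl; intro j _
              rw [hA, if_pos hr]
              by_cases h : ((i:ℕ) = (r:ℕ))
              · rw [if_pos h, if_pos (Fin.ext h), one_mul]
              · rw [if_neg h, if_neg (fun hh => h (by rw [hh])), zero_mul]
            have step2 : ∑ i : Fin n, ∑ j : Fin n, (if (i = rh) then w (i, j) else 0)
                = ∑ j : Fin n, w (rh, j) := by
              have : ∀ i : Fin n, ∑ j : Fin n, (if (i = rh) then w (i, j) else 0)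
                  = (if (i = rh) then (∑ j : Fin n, w (i, j)) else 0) := by
                intro i
                by_cases h : i = rh <;> simp [h]
              rw [Finset.sum_congr rfl (fun i _ => this i),
                Finset.sum_ite_eq' Finset.univ rh (fun i => ∑ j : Fin n, w (i, j)),
                if_pos (Finset.mem_univ rh)]
            have step3 : ∑ j : Fin n, w (rh, j) = ((n:ℝ)-1)/(n:ℝ) := by
              set la : Fin n := ⟨n-1, by omega⟩ with hla
              have hterm : ∀ j : Fin n, w (rh, j)
                  = 1/(n:ℝ) - (if j = la then 1/(n:ℝ) else 0) := by
                intro j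
                simp only [hwdef]
                by_cases h : ((j:ℕ) = n - 1)
                · rw [if_pos h, if_pos (Fin.ext h)]; ring
                · rw [if_neg h, if_neg (fun hh : j = la => h (by rw [hh]))]; ring
              rw [Finset.sum_congr rfl (fun j _ => hterm j), Finset.sum_sub_distrib,
                Finset.sum_ite_eq' Finset.univ la (fun _ => 1/(n:ℝ)),
                if_pos (Finset.mem_univ la), Finset.sum_const, Finset.card_univ,
                Fintype.card_fin, nsmul_eq_mul]
              field_simp
            rw [step1, step2, step3]
          · rw [if_neg hr]
            have hrn : (r:ℕ) - n < n := by have := r.isLt; omega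
            set jr : Fin n := ⟨(r:ℕ) - n, hrn⟩ with hjr
            have step1 : (A *ᵥ w) r = ∑ i : Fin n, ∑ j : Fin n,
                (if (j = jr) then w (i, j) else 0) := by
              simp only [Matrix.mulVec, dotProduct]
              rw [Fintype.sum_prod_type]
              apply Finset.sum_congr rfl; intro i _
              apply Finset.sum_congr rfl; intro j _
              rw [hA, if_neg hr]
              by_cases h : ((j:ℕ) = (r:ℕ) - n)
              · rw [if_pos h, if_pos (Fin.ext h), one_mul]
              · rw [if_neg h, if_neg (fun hh => h (by rw [hh])), zero_mul]
            have step2 : ∀ i : Fin n, ∑ j : Fin n, (if (j = jr) then w (i, j) else 0)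
                = w (i, jr) := by
              intro i
              have : ∀ j : Fin n, (if (j = jr) then w (i, j) else 0)
                  = (if (j = jr) then w (i, jr) else 0) := by
                intro j; by_cases h : j = jr <;> simp [h]
              rw [Finset.sum_congr rfl (fun j _ => this j),
                Finset.sum_ite_eq' Finset.univ jr (fun _ => w (i, jr)),
                if_pos (Finset.mem_univ jr)]
            have step3 : ∀ i : Fin n, w (i, jr) = 1/(n:ℝ) := by
              intro i
              simp only [hwdef]
              have : ¬ ((jr:ℕ) = n - 1) := by
                have := r.isLt
                simp only [hjr]
                omega
              rw [if_neg this]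
            rw [step1, Finset.sum_congr rfl (fun i _ => step2 i),
              Finset.sum_congr rfl (fun i _ => step3 i), Finset.sum_const,
              Finset.card_univ, Fintype.card_fin, nsmul_eq_mul]
            field_simp
        rw [expand, hAv, hAw, hb']
        by_cases hr : (r:ℕ) < n
        · rw [if_pos hr, if_pos hr]
          field_simp
          ring
        · rw [if_neg hr, if_neg hr]
          ring
    have hdist2 : Real.sqrt (∑ p, (v p - y p) ^ 2) < δ := by
      have hterm : ∀ p, (v p - y p)^2 ≤ ((n:ℝ)*t)^2 := by
        intro p
        have h1 : v p - y p = ((n:ℝ)*t) * (v p - w p) := by simp only [hydef]; ring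
        rw [h1, mul_pow]
        have h2 : (v p - w p)^2 ≤ 1 := by
          have := hvP'.1 p
          have := hub v hvP p
          have := (hw01 p).1
          have := (hw01 p).2
          nlinarith
        nlinarith [sq_nonneg ((n:ℝ)*t)]
      have h4 : ∑ p, (v p - y p)^2 ≤ ((n:ℝ)*(n:ℝ)*t)^2 := by
        calc ∑ p, (v p - y p)^2 ≤ ∑ _p : Fin n × Fin n, ((n:ℝ)*t)^2 :=
              Finset.sum_le_sum (fun p _ => hterm p)
          _ = ((n:ℝ)*(n:ℝ)) * ((n:ℝ)*t)^2 := by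
              rw [Finset.sum_const, Finset.card_univ]
              simp only [Fintype.card_prod, Fintype.card_fin, nsmul_eq_mul]
              push_cast
              ring
          _ = ((n:ℝ)*(n:ℝ)*t)^2 := by ring
      calc Real.sqrt (∑ p, (v p - y p)^2) ≤ Real.sqrt (((n:ℝ)*(n:ℝ)*t)^2) :=
            Real.sqrt_le_sqrt h4
        _ = (n:ℝ)*(n:ℝ)*t := Real.sqrt_sq (by positivity)
        _ < δ := by nlinarith [tkey]
    obtain ⟨kv, hkv⟩ := hf_int v hv
    have h1 := abs_lt.mp (hδf v hv y hdist2)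
    have h2 : f y ≤ f xstar := hxstar_max y hyP'
    have h3 := abs_lt.mp hfx
    have h4 : (kv:ℝ) < (kx:ℝ) + 1 := by
      rw [← hkv, ← hkx] at *
      linarith [h1.2, h3.1]
    have h5 : kv ≤ kx := by
      have : kv < kx + 1 := by exact_mod_cast h4
      omega
    rw [hkv, hkx]
    exact_mod_cast h5
  -- conclude via Krein-Milman
  refine ⟨hxhatP, ?_⟩
  intro y hy
  have hSconv : Convex ℝ {x : Fin n × Fin n → ℝ | f x ≤ f xhat} := by
    have := hf_qc (f xhat)
    simpa [Set.sep_univ] using this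
  have hScl : IsClosed {x : Fin n × Fin n → ℝ | f x ≤ f xhat} :=
    isClosed_le hf_cont continuous_const
  have hsub : P ⊆ {x | f x ≤ f xhat} := by
    rw [← closure_convexHull_extremePoints hPcomp hPconv]
    exact closure_minimal (convexHull_min (fun v hv => hkey v hv) hSconv) hScl
  exact hsub hy
end

section
/- Let n ≥ 1, let P be the Birkhoff polytope in R^{n×n}, and let f : R^{n×n} → R be continuous, convex, and integer-valued on the vertices of P. Let δ ∈ (0,1) be such that |f(x) − f(y)| < 1/2 whenever x is a vertex of P and ‖x − y‖ < δ (Frobenius norm). Let 0 < t < δ/(n(2n−1)) and let P'(t) be the perturbed polytope of n×n matrices x with x_{ij} ≥ 0 for all i,j, Σ_{j=1}^n x_{ij} = 1 − t for every i, and Σ_{i=1}^n x_{ij} = 1 for j = 1,…,n−1. Then for every integer K, if K ≥ max over the vertices of P'(t) of f, then K ≥ max over the vertices of P of f. -/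
/-- Any integer upper bound of the maximum of `f` over the vertices of the perturbed
polytope `P'(t)` (with `0 < t < δ/(n(2n-1))`) is also an upper bound of the maximum
of `f` over the vertices of the Birkhoff polytope `P`, provided `f` is continuous,
convex, integer valued on the vertices of `P`, and `δ ∈ (0,1)` satisfies
`|f x - f y| < 1/2` whenever `x` is a vertex of `P` and `‖x - y‖ < δ`. -/
theorem integer_upper_bound_transfer
    (n : ℕ) (hn : 1 ≤ n)
    (P P' : Set (Matrix (Fin n) (Fin n) ℝ))
    (hP : P = {x | (∀ i j, 0 ≤ x i j) ∧ (∀ i, ∑ j, x i j = 1) ∧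
      (∀ j, ∑ i, x i j = 1)})
    (f : Matrix (Fin n) (Fin n) ℝ → ℝ)
    (hf_cont : Continuous f)
    (hf_conv : ConvexOn ℝ Set.univ f)
    (hf_int : ∀ x ∈ Set.extremePoints ℝ P, ∃ k : ℤ, f x = (k : ℝ))
    (δ t : ℝ) (hδ : δ ∈ Set.Ioo (0 : ℝ) 1)
    (hδf : ∀ x ∈ Set.extremePoints ℝ P, ∀ y,
      Real.sqrt (∑ i, ∑ j, (x i j - y i j) ^ 2) < δ → |f x - f y| < 1 / 2)
    (ht : 0 < t) (ht' : t < δ / (n * (2 * n - 1)))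
    (hP' : P' = {x | (∀ i j, 0 ≤ x i j) ∧ (∀ i, ∑ j, x i j = 1 - t) ∧
      (∀ j : Fin n, (j : ℕ) < n - 1 → ∑ i, x i j = 1)})
    (K : ℤ) (hK : ∀ x ∈ Set.extremePoints ℝ P', f x ≤ (K : ℝ)) :
    ∀ x ∈ Set.extremePoints ℝ P, f x ≤ (K : ℝ) := by
  obtain ⟨hδ0, hδ1⟩ := hδ
  have hn1 : (1:ℝ) ≤ (n:ℝ) := by exact_mod_cast hn
  have hnR : (0:ℝ) < (n:ℝ) := by linarith
  have hden : (0:ℝ) < (n:ℝ) * (2 * n - 1) := by nlinarith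
  have htδ : t * ((n:ℝ) * (2 * n - 1)) < δ := (lt_div_iff₀ hden).mp ht'
  have hnt1 : (n:ℝ) * t < 1 := by nlinarith
  have hnt0 : 0 ≤ (n:ℝ) * t := by positivity
  -- P' is convex
  have hP'conv : Convex ℝ P' := by
    rw [hP']
    intro a ha b hb p q hp hq hpq
    obtain ⟨ha0, har, hac⟩ := ha
    obtain ⟨hb0, hbr, hbc⟩ := hb
    have happ : ∀ i j, (p • a + q • b) i j = p * a i j + q * b i j := by
      intro i j
      simp [Matrix.add_apply, Matrix.smul_apply, smul_eq_mul]
    refine ⟨fun i j => ?_, fun i => ?_, fun j hj => ?_⟩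
    · rw [happ]
      exact add_nonneg (mul_nonneg hp (ha0 i j)) (mul_nonneg hq (hb0 i j))
    · rw [Finset.sum_congr rfl fun j _ => happ i j, Finset.sum_add_distrib,
        ← Finset.mul_sum, ← Finset.mul_sum, har i, hbr i]
      nlinarith
    · rw [Finset.sum_congr rfl fun i _ => happ i j, Finset.sum_add_distrib,
        ← Finset.mul_sum, ← Finset.mul_sum, hac j hj, hbc j hj]
      nlinarith
  -- P' is closed
  have hP'closed : IsClosed P' := by
    rw [hP']
    have h1 : IsClosed {x : Matrix (Fin n) (Fin n) ℝ | ∀ i j, 0 ≤ x i j} := by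
      simp only [Set.setOf_forall]
      exact isClosed_iInter fun i => isClosed_iInter fun j =>
        isClosed_le continuous_const ((continuous_apply j).comp (continuous_apply i))
    have h2 : IsClosed {x : Matrix (Fin n) (Fin n) ℝ | ∀ i, ∑ j, x i j = 1 - t} := by
      simp only [Set.setOf_forall]
      exact isClosed_iInter fun i => isClosed_eq
        (continuous_finset_sum _ fun j _ => (continuous_apply j).comp (continuous_apply i))
        continuous_const
    have h3 : IsClosed {x : Matrix (Fin n) (Fin n) ℝ |
        ∀ j : Fin n, (j : ℕ) < n - 1 → ∑ i, x i j = 1} := by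
      simp only [Set.setOf_forall]
      refine isClosed_iInter fun j => isClosed_iInter fun _ => ?_
      have hc : Continuous (fun x : Matrix (Fin n) (Fin n) ℝ => ∑ i, x i j) :=
        continuous_finset_sum _ fun i _ => (continuous_apply j).comp (continuous_apply i)
      exact isClosed_eq hc continuous_const
    exact h1.inter (h2.inter h3)
  -- P' is compact
  have hP'comp : IsCompact P' := by
    have hbox : IsCompact (Set.pi Set.univ
        (fun _ : Fin n => Set.pi Set.univ fun _ : Fin n => Set.Icc (0:ℝ) 1) :
        Set (Matrix (Fin n) (Fin n) ℝ)) :=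
      isCompact_univ_pi fun _ => isCompact_univ_pi fun _ => isCompact_Icc
    refine hbox.of_isClosed_subset hP'closed ?_
    intro w hw
    rw [hP'] at hw
    obtain ⟨hw0, hwr, _⟩ := hw
    intro i _
    intro j _
    refine ⟨hw0 i j, ?_⟩
    calc w i j ≤ ∑ j', w i j' :=
          Finset.single_le_sum (fun j' _ => hw0 i j') (Finset.mem_univ j)
      _ = 1 - t := hwr i
      _ ≤ 1 := by linarith
  -- f is bounded by K on all of P'
  have hfK' : ∀ w ∈ P', f w ≤ (K : ℝ) := by
    have hlcs : LocallyConvexSpace ℝ (Matrix (Fin n) (Fin n) ℝ) := by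
      show LocallyConvexSpace ℝ (Fin n → Fin n → ℝ); infer_instance
    have hcl : closure (convexHull ℝ (P'.extremePoints ℝ)) = P' :=
      closure_convexHull_extremePoints hP'comp hP'conv
    intro w hw
    rw [← hcl] at hw
    refine closure_minimal ?_ (isClosed_le hf_cont continuous_const) hw
    intro v hv
    obtain ⟨u, hu, hvu⟩ := hf_conv.exists_ge_of_mem_convexHull (Set.subset_univ _) hv
    exact hvu.trans (hK u hu)
  -- Main argument
  intro x hx
  have hxP : x ∈ P := extremePoints_subset hx
  rw [hP] at hxP
  obtain ⟨hx0, hxr, hxc⟩ := hxP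
  have hx1 : ∀ i j, x i j ≤ 1 := by
    intro i j
    calc x i j ≤ ∑ i', x i' j :=
          Finset.single_le_sum (fun i' _ => hx0 i' j) (Finset.mem_univ i)
      _ = 1 := hxc j
  set m : Fin n := ⟨n - 1, by omega⟩ with hm
  set z : Matrix (Fin n) (Fin n) ℝ := fun i j => if j = m then 0 else 1 / n with hz
  set y : Matrix (Fin n) (Fin n) ℝ :=
    fun i j => (1 - n * t) * x i j + (n * t) * z i j with hy
  have hz0 : ∀ i j, 0 ≤ z i j := by
    intro i j; simp only [hz]; split_ifs
    · exact le_rfl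
    · positivity
  have hz1 : ∀ i j, z i j ≤ 1 := by
    intro i j; simp only [hz]; split_ifs
    · exact zero_le_one
    · rw [div_le_one hnR]; exact hn1
  have hyP' : y ∈ P' := by
    rw [hP']
    refine ⟨fun i j => ?_, fun i => ?_, fun j hj => ?_⟩
    · exact add_nonneg (mul_nonneg (by linarith) (hx0 i j)) (mul_nonneg hnt0 (hz0 i j))
    · have hzr : ∑ j, z i j = 1 - 1 / (n:ℝ) := by
        have hrw : ∀ j : Fin n, z i j = 1 / (n:ℝ) - (if j = m then 1 / (n:ℝ) else 0) := by
          intro j; simp only [hz]; split_ifs <;> ring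
        rw [Finset.sum_congr rfl fun j _ => hrw j, Finset.sum_sub_distrib,
          Finset.sum_ite_eq' Finset.univ m fun _ => 1 / (n:ℝ)]
        simp [Finset.card_univ, Finset.sum_const]
        field_simp
      have hsplit : ∑ j, y i j = (1 - n * t) * (∑ j, x i j) + (n * t) * (∑ j, z i j) := by
        simp only [hy, Finset.sum_add_distrib, Finset.mul_sum]
      rw [hsplit, hxr i, hzr]
      field_simp
      ring
    · have hjm : j ≠ m := by
        intro h
        rw [h] at hj
        simp only [hm] at hj
        omega
      have hzc : ∀ i' : Fin n, z i' j = 1 / (n:ℝ) := fun i' => if_neg hjm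
      have hsplit : ∑ i', y i' j = (1 - n * t) * (∑ i', x i' j) + (n * t) * (∑ i', z i' j) := by
        simp only [hy, Finset.sum_add_distrib, Finset.mul_sum]
      rw [hsplit, hxc j, Finset.sum_congr rfl fun i' _ => hzc i']
      simp only [Finset.sum_const, Finset.card_univ, Fintype.card_fin, nsmul_eq_mul]
      field_simp
      ring
  -- distance bound
  have hsum : ∑ i, ∑ j, (x i j - y i j) ^ 2 ≤ ((n:ℝ) ^ 2 * t) ^ 2 := by
    have hb : ∀ i j : Fin n, (x i j - y i j) ^ 2 ≤ ((n:ℝ) * t) ^ 2 := by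
      intro i j
      have h1 : x i j - y i j = ((n:ℝ) * t) * (x i j - z i j) := by
        simp only [hy]; ring
      rw [h1, mul_pow]
      have h2 : (x i j - z i j) ^ 2 ≤ 1 := by
        nlinarith [hx0 i j, hx1 i j, hz0 i j, hz1 i j]
      nlinarith [sq_nonneg ((n:ℝ) * t)]
    calc ∑ i, ∑ j, (x i j - y i j) ^ 2
        ≤ ∑ _i : Fin n, ∑ _j : Fin n, ((n:ℝ) * t) ^ 2 :=
          Finset.sum_le_sum fun i _ => Finset.sum_le_sum fun j _ => hb i j
      _ = (n:ℝ) * ((n:ℝ) * ((n:ℝ) * t) ^ 2) := by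
          simp [Finset.sum_const, Finset.card_univ, mul_assoc]
      _ = ((n:ℝ) ^ 2 * t) ^ 2 := by ring
  have hdist : Real.sqrt (∑ i, ∑ j, (x i j - y i j) ^ 2) < δ := by
    have h1 : Real.sqrt (∑ i, ∑ j, (x i j - y i j) ^ 2) ≤ (n:ℝ) ^ 2 * t :=
      calc Real.sqrt (∑ i, ∑ j, (x i j - y i j) ^ 2)
          ≤ Real.sqrt (((n:ℝ) ^ 2 * t) ^ 2) := Real.sqrt_le_sqrt hsum
        _ = (n:ℝ) ^ 2 * t := Real.sqrt_sq (by positivity)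
    have h2 : (n:ℝ) ^ 2 * t < δ := by nlinarith
    linarith
  have hfy : f y ≤ (K : ℝ) := hfK' y hyP'
  have habs : |f x - f y| < 1 / 2 := hδf x hx y hdist
  obtain ⟨k, hk⟩ := hf_int x hx
  rw [hk]
  have hlt : (k:ℝ) < (K:ℝ) + 1 := by
    rw [hk] at habs
    have := abs_lt.mp habs
    linarith [this.1, this.2]
  have : k < K + 1 := by exact_mod_cast hlt
  have : k ≤ K := by omega
  exact_mod_cast this
end

section
/- Let E¹ and E² be the (symmetric 0-1) adjacency matrices of two simple undirected graphs on n vertices, and let Q be the real symmetric n²×n² matrix such that trace((E¹x)ᵀ (x E²)) = vec(x)ᵀ Q vec(x) for all x ∈ R^{n×n}. Let λ = max{|λⁱ| : λⁱ is an eigenvalue of Q} and let μ > λ. Then a matrix x* maximizes vec(x)ᵀ[Q + μI]vec(x) over the Birkhoff polytope if and only if x* is an n×n permutation matrix that maximizes trace((E¹x)ᵀ (x E²)) over all n×n permutation matrices. -/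
open Matrix

section Aux

variable {ι : Type*} [Fintype ι] [DecidableEq ι]

lemma gm_dot_symm (A : Matrix ι ι ℝ) (hA : Aᵀ = A) (v w : ι → ℝ) :
    v ⬝ᵥ A *ᵥ w = w ⬝ᵥ A *ᵥ v := by
  rw [dotProduct_mulVec, ← mulVec_transpose, hA, dotProduct_comm]

lemma gm_quad_identity (A : Matrix ι ι ℝ) (hA : Aᵀ = A) (v w : ι → ℝ) (a b : ℝ)
    (hab : a + b = 1) :
    (a • v + b • w) ⬝ᵥ A *ᵥ (a • v + b • w) =
      a * (v ⬝ᵥ A *ᵥ v) + b * (w ⬝ᵥ A *ᵥ w) - a * b * ((v - w) ⬝ᵥ A *ᵥ (v - w)) := by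
  have hb : b = 1 - a := by linarith
  subst hb
  have h := gm_dot_symm A hA w v
  simp only [mulVec_add, mulVec_sub, Matrix.mulVec_smul, dotProduct_add, add_dotProduct,
    dotProduct_sub, sub_dotProduct, smul_dotProduct, dotProduct_smul, smul_eq_mul]
  rw [h]
  ring

end Aux

/-- Graph matching as convex maximization: for `μ` larger than the absolute value of
every eigenvalue of the symmetric matrix `Q` representing the quadratic form
`x ↦ trace((E¹x)ᵀ (x E²))`, a matrix `x*` maximizes `vec(x)ᵀ[Q + μI]vec(x)` over the
Birkhoff polytope if and only if `x*` is a permutation matrix maximizing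
`trace((E¹x)ᵀ (x E²))` over all permutation matrices. -/
theorem graph_matching_convex_maximization
    (n : ℕ) (E1 E2 : Matrix (Fin n) (Fin n) ℝ)
    (hE1symm : E1.IsSymm) (hE2symm : E2.IsSymm)
    (hE1entries : ∀ i j, E1 i j = 0 ∨ E1 i j = 1)
    (hE2entries : ∀ i j, E2 i j = 0 ∨ E2 i j = 1)
    (hE1diag : ∀ i, E1 i i = 0) (hE2diag : ∀ i, E2 i i = 0)
    (Q : Matrix (Fin n × Fin n) (Fin n × Fin n) ℝ) (hQsymm : Q.IsSymm)
    (hQ : ∀ x : Matrix (Fin n) (Fin n) ℝ,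
      Matrix.trace ((E1 * x)ᵀ * (x * E2)) =
        (fun p : Fin n × Fin n => x p.1 p.2) ⬝ᵥ
          (Q *ᵥ fun p : Fin n × Fin n => x p.1 p.2))
    (μ : ℝ)
    (hμ : ∀ c : ℝ, (∃ v : Fin n × Fin n → ℝ, v ≠ 0 ∧ Q *ᵥ v = c • v) → |c| < μ)
    (P : Set (Matrix (Fin n) (Fin n) ℝ))
    (hP : P = {x | (∀ i j, 0 ≤ x i j) ∧ (∀ i, ∑ j, x i j = 1) ∧
      (∀ j, ∑ i, x i j = 1)})
    (g : Matrix (Fin n) (Fin n) ℝ → ℝ)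
    (hg : ∀ x, g x = (fun p : Fin n × Fin n => x p.1 p.2) ⬝ᵥ
      ((Q + μ • (1 : Matrix (Fin n × Fin n) (Fin n × Fin n) ℝ)) *ᵥ
        fun p : Fin n × Fin n => x p.1 p.2))
    (xstar : Matrix (Fin n) (Fin n) ℝ) :
    (xstar ∈ P ∧ ∀ y ∈ P, g y ≤ g xstar) ↔
      ((∃ σ : Equiv.Perm (Fin n), ∀ i j, xstar i j = if σ i = j then 1 else 0) ∧
        ∀ y : Matrix (Fin n) (Fin n) ℝ,
          (∃ σ : Equiv.Perm (Fin n), ∀ i j, y i j = if σ i = j then 1 else 0) →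
          Matrix.trace ((E1 * y)ᵀ * (y * E2)) ≤
            Matrix.trace ((E1 * xstar)ᵀ * (xstar * E2))) := by
  classical
  set v : Matrix (Fin n) (Fin n) ℝ → (Fin n × Fin n → ℝ) :=
    fun x p => x p.1 p.2 with hv
  set A : Matrix (Fin n × Fin n) (Fin n × Fin n) ℝ := Q + μ • 1 with hA
  have hQt : Qᵀ = Q := hQsymm
  have hAsymm : Aᵀ = A := by
    rw [hA, transpose_add, transpose_smul, transpose_one, hQt]
  have hAherm : A.IsHermitian := by
    rw [Matrix.IsHermitian, conjTranspose]
    exact hAsymm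
  -- linearity of vectorization
  have hvlin : ∀ (a b : ℝ) (x y : Matrix (Fin n) (Fin n) ℝ),
      v (a • x + b • y) = a • v x + b • v y := by
    intro a b x y; funext p; rfl
  have hvinj : Function.Injective v := by
    intro x y h; ext i j; exact congrFun h (i, j)
  -- positivity of eigenvalues of A
  have heig : ∀ c : ℝ, (∃ u : Fin n × Fin n → ℝ, u ≠ 0 ∧ A *ᵥ u = c • u) → 0 < c := by
    rintro c ⟨u, hu, huA⟩
    have hAu : A *ᵥ u = Q *ᵥ u + μ • u := by
      rw [hA, add_mulVec, smul_mulVec, one_mulVec]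
    have hQu : Q *ᵥ u = (c - μ) • u := by
      rw [sub_smul, ← huA, hAu]; abel
    have h := abs_lt.1 (hμ (c - μ) ⟨u, hu, hQu⟩)
    linarith [h.1]
  have hPSD : A.PosSemidef := by
    apply (Matrix.IsHermitian.posSemidef_iff_eigenvalues_nonneg hAherm).2
    intro i
    refine (heig _ ⟨⇑(hAherm.eigenvectorBasis i), ?_, hAherm.mulVec_eigenvectorBasis i⟩).le
    intro h
    exact (hAherm.eigenvectorBasis).orthonormal.ne_zero i (by ext p; exact congrFun h p)
  have hPSD' : ∀ u : Fin n × Fin n → ℝ, 0 ≤ u ⬝ᵥ A *ᵥ u := by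
    intro u; simpa using hPSD.dotProduct_mulVec_nonneg u
  have hPD : ∀ u : Fin n × Fin n → ℝ, u ≠ 0 → 0 < u ⬝ᵥ A *ᵥ u := by
    intro u hu
    rcases (hPSD' u).lt_or_eq with h | h
    · exact h
    · exfalso
      have h0 : A *ᵥ u = 0 := by
        have := (hPSD.dotProduct_mulVec_zero_iff u).1 (by simpa using h.symm)
        exact this
      have : (0 : ℝ) < 0 := heig 0 ⟨u, hu, by simpa using h0⟩
      exact lt_irrefl _ this
  -- g expansion
  have hgsplit : ∀ x, g x = Matrix.trace ((E1 * x)ᵀ * (x * E2)) + μ * (v x ⬝ᵥ v x) := by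
    intro x
    rw [hg, hQ]
    have : (Q + μ • 1) *ᵥ v x = Q *ᵥ v x + μ • v x := by
      rw [add_mulVec, smul_mulVec, one_mulVec]
    rw [show ((fun p : Fin n × Fin n => x p.1 p.2)) = v x from rfl, this, dotProduct_add,
      dotProduct_smul, smul_eq_mul]
  have hgA : ∀ x, g x = v x ⬝ᵥ A *ᵥ v x := fun x => hg x
  -- convexity inequalities
  have hconvex : ∀ (x y : Matrix (Fin n) (Fin n) ℝ) (a b : ℝ), 0 ≤ a → 0 ≤ b → a + b = 1 →
      g (a • x + b • y) ≤ a * g x + b * g y := by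
    intro x y a b ha hb hab
    rw [hgA, hgA, hgA, hvlin, gm_quad_identity A hAsymm _ _ a b hab]
    have h := mul_nonneg (mul_nonneg ha hb) (hPSD' (v x - v y))
    linarith
  have hstrict : ∀ (x y : Matrix (Fin n) (Fin n) ℝ) (a b : ℝ), 0 < a → 0 < b → a + b = 1 →
      x ≠ y → g (a • x + b • y) < a * g x + b * g y := by
    intro x y a b ha hb hab hne
    rw [hgA, hgA, hgA, hvlin, gm_quad_identity A hAsymm _ _ a b hab]
    have hvne : v x - v y ≠ 0 := sub_ne_zero.2 (fun h => hne (hvinj h))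
    have h := mul_pos (mul_pos ha hb) (hPD _ hvne)
    linarith
  -- Birkhoff polytope
  set S : Set (Matrix (Fin n) (Fin n) ℝ) :=
    {x | ∃ σ : Equiv.Perm (Fin n), x = σ.permMatrix ℝ} with hS
  have hPds : P = (doublyStochastic ℝ (Fin n) : Set (Matrix (Fin n) (Fin n) ℝ)) := by
    rw [hP]; ext x
    simp [mem_doublyStochastic_iff_sum, SetLike.mem_coe]
  have hP_eq : P = convexHull ℝ S := by
    rw [hPds, hS]
    rw [doublyStochastic_eq_convexHull_permMatrix]
    congr 1
    ext x
    constructor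
    · rintro ⟨σ, h⟩; exact ⟨σ, h.symm⟩
    · rintro ⟨σ, h⟩; exact ⟨σ, h.symm⟩
  -- permutation matrix characterizations
  have hperm_entry : ∀ (σ : Equiv.Perm (Fin n)) (i j : Fin n),
      (σ.permMatrix ℝ) i j = if σ i = j then 1 else 0 := by
    intro σ i j
    simp [Equiv.Perm.permMatrix, PEquiv.toMatrix_apply, Equiv.toPEquiv_apply, eq_comm]
  have hperm_iff : ∀ y : Matrix (Fin n) (Fin n) ℝ,
      (∃ σ : Equiv.Perm (Fin n), ∀ i j, y i j = if σ i = j then 1 else 0) ↔ y ∈ S := by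
    intro y
    constructor
    · rintro ⟨σ, h⟩
      exact ⟨σ, by ext i j; rw [h i j, hperm_entry]⟩
    · rintro ⟨σ, rfl⟩
      exact ⟨σ, fun i j => hperm_entry σ i j⟩
  have hpermP : ∀ σ : Equiv.Perm (Fin n), (σ.permMatrix ℝ) ∈ P := by
    intro σ
    rw [hPds]
    exact permMatrix_mem_doublyStochastic
  -- squared norm of a permutation matrix
  have hnorm : ∀ σ : Equiv.Perm (Fin n),
      v (σ.permMatrix ℝ) ⬝ᵥ v (σ.permMatrix ℝ) = (n : ℝ) := by
    intro σ
    have : ∀ p : Fin n × Fin n,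
        v (σ.permMatrix ℝ) p * v (σ.permMatrix ℝ) p =
          if σ p.1 = p.2 then 1 else 0 := by
      intro p
      simp only [hv, hperm_entry]
      split <;> norm_num
    rw [dotProduct]
    rw [Finset.sum_congr rfl fun p _ => this p]
    rw [Fintype.sum_prod_type]
    simp [Finset.sum_ite_eq]
  have hgperm : ∀ σ : Equiv.Perm (Fin n),
      g (σ.permMatrix ℝ) =
        Matrix.trace ((E1 * σ.permMatrix ℝ)ᵀ * (σ.permMatrix ℝ * E2)) + μ * n := by
    intro σ
    rw [hgsplit, hnorm]
  constructor
  · rintro ⟨hxP, hmax⟩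
    -- xstar is an extreme point of P, hence a permutation matrix
    have hxS : xstar ∈ S := by
      have hext : xstar ∈ (convexHull ℝ S).extremePoints ℝ := by
        rw [← hP_eq]
        refine ⟨hxP, ?_⟩
        intro x₁ h₁ x₂ h₂ hseg
        obtain ⟨a, b, ha, hb, hab, hx⟩ := hseg
        by_cases hne : x₁ = x₂
        · subst hne
          have hx1 : xstar = x₁ := by
            rw [← hx, ← add_smul, hab, one_smul]
          exact hx1.symm
        · exfalso
          have hlt : g xstar < a * g x₁ + b * g x₂ := by
            rw [← hx]; exact hstrict x₁ x₂ a b ha hb hab hne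
          have h1 := mul_le_mul_of_nonneg_left (hmax x₁ h₁) ha.le
          have h2 := mul_le_mul_of_nonneg_left (hmax x₂ h₂) hb.le
          have h3 : a * g xstar + b * g xstar = g xstar := by
            rw [← add_mul, hab, one_mul]
          linarith
      exact extremePoints_convexHull_subset hext
    refine ⟨(hperm_iff xstar).2 hxS, ?_⟩
    intro y hy
    obtain ⟨τ, hy'⟩ := hy
    have hyS : y ∈ S := (hperm_iff y).1 ⟨τ, hy'⟩
    obtain ⟨τ', rfl⟩ := hyS
    obtain ⟨σ, hxeq⟩ := hxS
    have h1 : g (τ'.permMatrix ℝ) ≤ g xstar := hmax _ (hpermP τ')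
    rw [hgperm τ'] at h1
    rw [hxeq] at h1 ⊢
    rw [hgperm σ] at h1
    linarith
  · rintro ⟨⟨σ, hσ⟩, hbest⟩
    have hxeq : xstar = σ.permMatrix ℝ := by
      ext i j; rw [hσ i j, hperm_entry]
    have hxP : xstar ∈ P := by rw [hxeq]; exact hpermP σ
    refine ⟨hxP, ?_⟩
    intro y hy
    have hy' : y ∈ convexHull ℝ S := by rw [← hP_eq]; exact hy
    have hconv : ConvexOn ℝ (convexHull ℝ S) g := by
      refine ⟨convex_convexHull ℝ S, ?_⟩
      intro p hp q hq a b ha hb hab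
      simpa [smul_eq_mul] using hconvex p q a b ha hb hab
    obtain ⟨z, hzS, hgz⟩ :=
      hconv.exists_ge_of_mem_convexHull (subset_convexHull ℝ S) hy'
    obtain ⟨τ, rfl⟩ := hzS
    have hfle : Matrix.trace ((E1 * τ.permMatrix ℝ)ᵀ * (τ.permMatrix ℝ * E2)) ≤
        Matrix.trace ((E1 * xstar)ᵀ * (xstar * E2)) :=
      hbest _ ⟨τ, fun i j => hperm_entry τ i j⟩
    have hgx : g xstar = Matrix.trace ((E1 * xstar)ᵀ * (xstar * E2)) + μ * n := by
      rw [hxeq, hgperm σ, ← hxeq]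
    rw [hgperm τ] at hgz
    linarith
end
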